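/- The constant function minimizes the L^q norm among mean-zero perturbations: let (X,μ) be a measure space with 0 < μ(X) < ∞, let q ≥ 2, and let φ ∈ L^q(μ) be real-valued with ∫ φ dμ = 0. Then ‖1+φ‖_{L^q} ≥ μ(X)^{1/q}, with equality if and only if φ = 0 almost everywhere. -/

import Mathlib

open MeasureTheory

lemma bernoulli_abs_key {q t : ℝ} (hq : 1 < q) :
    1 + q * t ≤ |1 + t| ^ q ∧ (|1 + t| ^ q = 1 + q * t → t = 0) := by
  rcases le_or_gt (-1) t with ht | ht
  · have h1 : (0:ℝ) ≤ 1 + t := by linarith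
    rw [abs_of_nonneg h1]
    constructor
    · exact one_add_mul_self_le_rpow_one_add ht hq.le
    · intro h
      by_contra hne
      exact absurd h.symm (ne_of_lt (one_add_mul_self_lt_rpow_one_add ht hne hq))
  · have h2 : 1 + q * t < 0 := by nlinarith
    have h3 : (0:ℝ) ≤ |1 + t| ^ q := Real.rpow_nonneg (abs_nonneg _) _
    exact ⟨le_trans h2.le h3, fun h => absurd (h ▸ h3) (not_le.mpr h2)⟩

/-- **The constant function minimizes the `L^q` norm among mean-zero perturbations:**
on a measure space of finite positive mass, for `q ≥ 2` and real `φ ∈ L^q(μ)` with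
`∫ φ dμ = 0`, one has `‖1+φ‖_q ≥ μ(X)^{1/q}`, with equality iff `φ = 0` a.e. -/
theorem one_add_mean_zero_lq_norm_ge {X : Type*} [MeasurableSpace X] (μ : Measure X)
    (hpos : 0 < μ Set.univ) (hfin : μ Set.univ < ⊤) (q : ℝ) (hq : 2 ≤ q)
    (φ : X → ℝ) (hφ : MemLp φ (ENNReal.ofReal q) μ) (hmean : ∫ x, φ x ∂μ = 0) :
    (μ Set.univ).toReal ^ (1 / q) ≤ (eLpNorm (fun x => 1 + φ x) (ENNReal.ofReal q) μ).toReal ∧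
      ((eLpNorm (fun x => 1 + φ x) (ENNReal.ofReal q) μ).toReal =
          (μ Set.univ).toReal ^ (1 / q) ↔ φ =ᵐ[μ] 0) := by
  haveI : IsFiniteMeasure μ := ⟨hfin⟩
  have hq1 : (1:ℝ) < q := by linarith
  have hq0 : (0:ℝ) < q := by linarith
  have hp0 : (ENNReal.ofReal q) ≠ 0 := by
    simp only [ne_eq, ENNReal.ofReal_eq_zero, not_le]; exact hq0
  have hpt : (ENNReal.ofReal q) ≠ ⊤ := ENNReal.ofReal_ne_top
  have hptr : (ENNReal.ofReal q).toReal = q := ENNReal.toReal_ofReal hq0.le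
  have hp1 : (1:ENNReal) ≤ ENNReal.ofReal q := by
    rw [← ENNReal.ofReal_one]; exact ENNReal.ofReal_le_ofReal (by linarith)
  have hf : MemLp (fun x => 1 + φ x) (ENNReal.ofReal q) μ := (memLp_const (1:ℝ)).add hφ
  set M : ℝ := (μ Set.univ).toReal with hM
  have hM0 : 0 < M := ENNReal.toReal_pos hpos.ne' hfin.ne
  set I : ℝ := ∫ x, ‖1 + φ x‖ ^ q ∂μ with hI
  -- integrability facts
  have hφint : Integrable φ μ := hφ.integrable hp1
  have hIq : Integrable (fun x => ‖1 + φ x‖ ^ q) μ := by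
    have := hf.integrable_norm_rpow hp0 hpt
    rwa [hptr] at this
  have hlin : Integrable (fun x => 1 + q * φ x) μ :=
    (integrable_const (1:ℝ)).add (hφint.const_mul q)
  have hlinint : ∫ x, (1 + q * φ x) ∂μ = M := by
    rw [integral_add (integrable_const _) (hφint.const_mul q), integral_const,
      integral_const_mul, hmean, smul_eq_mul, mul_one, mul_zero, add_zero, measureReal_def]
  have hpw : ∀ x, 1 + q * φ x ≤ ‖1 + φ x‖ ^ q := fun x => by
    rw [Real.norm_eq_abs]; exact (bernoulli_abs_key hq1).1
  have hMI : M ≤ I := by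
    rw [← hlinint]
    exact integral_mono hlin hIq hpw
  have hI0 : 0 ≤ I := le_trans hM0.le hMI
  -- eLpNorm computation
  have hel : (eLpNorm (fun x => 1 + φ x) (ENNReal.ofReal q) μ).toReal = I ^ (1/q) := by
    rw [hf.eLpNorm_eq_integral_rpow_norm hp0 hpt, hptr, ENNReal.toReal_ofReal (by positivity),
      one_div]
  constructor
  · rw [hel]
    exact Real.rpow_le_rpow hM0.le hMI (by positivity)
  · rw [hel]
    constructor
    · intro h
      have hIM : I = M :=
        Real.rpow_left_injOn (by positivity : 1/q ≠ 0) hI0 hM0.le h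
      have hzero : ∫ x, (‖1 + φ x‖ ^ q - (1 + q * φ x)) ∂μ = 0 := by
        rw [integral_sub hIq hlin, hlinint, ← hI, hIM, sub_self]
      have hae := (integral_eq_zero_iff_of_nonneg
        (fun x => sub_nonneg.mpr (hpw x)) (hIq.sub hlin)).mp hzero
      filter_upwards [hae] with x hx
      have hx' : ‖1 + φ x‖ ^ q = 1 + q * φ x := by
        have : ‖1 + φ x‖ ^ q - (1 + q * φ x) = 0 := hx
        linarith
      rw [Real.norm_eq_abs] at hx'
      exact (bernoulli_abs_key hq1).2 hx'
    · intro h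
      have hIM : I = M := by
        rw [hI, ← hlinint]
        refine integral_congr_ae ?_
        filter_upwards [h] with x hx
        simp [hx]
      rw [hIM]
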